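/- Let ρ* := (3/10)·( ((√5 − 1)/2)^{1/3} − 1 − (2/(√5 − 1))^{1/3} ), and take ρ = ρ*. Then the random variable X := 10·U + V³ − 3·V satisfies E[X⁴] = 3·E[X²]² (i.e., its fourth cumulant κ₄(X) vanishes), but E[X⁶] ≠ 15·E[X²]³; in particular, the law of X is not equal to any Gaussian measure on ℝ, so X is not Gaussian. (This shows the fourth-moment theorem fails for a sum of elements of the first and third Wiener chaoses.) -/

import Mathlib

open MeasureTheory ProbabilityTheory Real


noncomputable def gm : ℕ → ℝ
  | 0 => 1
  | 1 => 0
  | (n+2) => (n+1) * gm n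

lemma integrable_poly_gauss (n : ℕ) :
    Integrable (fun x : ℝ => x ^ n * rexp (-(x ^ 2 / 2))) := by
  have key : ∀ x : ℝ, ‖x ^ n * rexp (-(x ^ 2 / 2))‖
      ≤ ‖(n.factorial * Real.exp 1) * rexp (-(1/4) * x ^ 2)‖ := by
    intro x
    have h1 : |x| ^ n ≤ (n.factorial : ℝ) * rexp |x| := by
      have h2 := Real.sum_le_exp_of_nonneg (abs_nonneg x) (n+1)
      have h3 : |x| ^ n / (n.factorial : ℝ) ≤ rexp |x| :=
        le_trans (Finset.single_le_sum (f := fun i => |x| ^ i / (i.factorial : ℝ))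
          (fun i _ => by positivity) (Finset.self_mem_range_succ n)) h2
      have h4 : (0:ℝ) < n.factorial := by positivity
      calc |x| ^ n = |x| ^ n / (n.factorial:ℝ) * n.factorial := by field_simp
      _ ≤ rexp |x| * n.factorial := by gcongr
      _ = _ := by ring
    have h5 : rexp (|x| - x^2/2) ≤ rexp (1 - x^2/4) := by
      apply Real.exp_le_exp.mpr; nlinarith [sq_nonneg (|x| - 2), sq_abs x]
    have h6 : ‖x ^ n * rexp (-(x ^ 2 / 2))‖ = |x| ^ n * rexp (-(x^2/2)) := by
      rw [norm_mul, norm_pow]; simp [abs_of_pos (Real.exp_pos _)]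
    rw [h6]
    have h7 : |x| ^ n * rexp (-(x^2/2)) ≤ (n.factorial : ℝ) * rexp |x| * rexp (-(x^2/2)) := by
      gcongr
    calc |x| ^ n * rexp (-(x^2/2)) ≤ (n.factorial : ℝ) * rexp |x| * rexp (-(x^2/2)) := h7
    _ = (n.factorial : ℝ) * rexp (|x| - x^2/2) := by rw [mul_assoc, ← Real.exp_add]; ring_nf
    _ ≤ (n.factorial : ℝ) * rexp (1 - x^2/4) := by gcongr
    _ = (n.factorial : ℝ) * Real.exp 1 * rexp (-(1/4) * x^2) := by
        rw [mul_assoc, ← Real.exp_add]; ring_nf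
    _ ≤ ‖(n.factorial * Real.exp 1) * rexp (-(1/4) * x ^ 2)‖ := le_abs_self _
  exact Integrable.mono ((integrable_exp_neg_mul_sq (by norm_num : (0:ℝ) < 1/4)).const_mul _)
    ((continuous_pow n).mul (by continuity)).aestronglyMeasurable
    (Filter.Eventually.of_forall key)

lemma gauss_zero : ∫ x : ℝ, rexp (-(x ^ 2 / 2)) = √(2 * π) := by
  have h := integral_gaussian (1/2 : ℝ)
  simp_rw [show ∀ x : ℝ, -(1/2 : ℝ) * x ^ 2 = -(x^2/2) from fun x => by ring] at h
  rw [h]; congr 1; ring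

lemma gauss_one : ∫ x : ℝ, x ^ 1 * rexp (-(x ^ 2 / 2)) = 0 := by
  have hderiv : ∀ x : ℝ, HasDerivAt (fun y : ℝ => -rexp (-(y ^ 2 / 2)))
      (x ^ 1 * rexp (-(x ^ 2 / 2))) x := by
    intro x
    have h3 : HasDerivAt (fun y : ℝ => -(y ^ 2 / 2)) (-x) x := by
      simpa using ((hasDerivAt_pow 2 x).div_const 2).fun_neg
    have := h3.exp.fun_neg
    refine this.congr_deriv ?_
    simp [mul_comm]
  exact integral_eq_zero_of_hasDerivAt_of_integrable hderiv (integrable_poly_gauss 1)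
    ((by simpa using integrable_poly_gauss 0 : Integrable (fun x : ℝ => rexp (-(x ^ 2 / 2)))).neg)

lemma gauss_rec (n : ℕ) : ∫ x : ℝ, x ^ (n+2) * rexp (-(x ^ 2 / 2))
    = (n+1 : ℝ) * ∫ x : ℝ, x ^ n * rexp (-(x ^ 2 / 2)) := by
  have hderiv : ∀ x : ℝ, HasDerivAt (fun y : ℝ => y ^ (n+1) * rexp (-(y ^ 2 / 2)))
      ((n+1 : ℝ) * (x ^ n * rexp (-(x ^ 2 / 2))) - x ^ (n+2) * rexp (-(x ^ 2 / 2))) x := by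
    intro x
    have h1 : HasDerivAt (fun y : ℝ => y ^ (n+1)) ((n+1 : ℝ) * x ^ n) x := by
      simpa using hasDerivAt_pow (n+1) x
    have h3 : HasDerivAt (fun y : ℝ => -(y ^ 2 / 2)) (-x) x := by
      simpa using ((hasDerivAt_pow 2 x).div_const 2).fun_neg
    have := h1.fun_mul h3.exp
    refine this.congr_deriv ?_
    ring
  have h0 := integral_eq_zero_of_hasDerivAt_of_integrable hderiv
    (((integrable_poly_gauss n).const_mul _).sub (integrable_poly_gauss (n+2)))
    (integrable_poly_gauss (n+1))
  rw [integral_sub ((integrable_poly_gauss n).const_mul _) (integrable_poly_gauss (n+2)),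
    integral_const_mul] at h0
  linarith

lemma gauss_R (n : ℕ) : ∫ x : ℝ, x ^ n * rexp (-(x ^ 2 / 2)) = gm n * √(2 * π) := by
  induction n using Nat.strong_induction_on with
  | _ n ih =>
    match n with
    | 0 => simpa [gm] using gauss_zero
    | 1 => simpa [gm] using gauss_one
    | (m+2) =>
      rw [gauss_rec m, ih m (by omega)]
      show _ = (m+1 : ℝ) * gm m * √(2*π)
      push_cast [gm]
      ring

lemma gaussian_pdf_repr : gaussianReal 0 1
    = volume.withDensity (fun x => ((Real.toNNReal (gaussianPDFReal 0 1 x) : NNReal) : ENNReal)) := by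
  rw [gaussianReal_of_var_ne_zero 0 one_ne_zero]
  rfl

lemma pdf_pointwise (n : ℕ) (x : ℝ) : (Real.toNNReal (gaussianPDFReal 0 1 x) : ℝ) • x ^ n
    = (√(2*π))⁻¹ * (x ^ n * rexp (-(x ^ 2 / 2))) := by
  rw [Real.coe_toNNReal _ (gaussianPDFReal_nonneg 0 1 x)]
  simp only [gaussianPDFReal, NNReal.coe_one, mul_one, sub_zero, smul_eq_mul, neg_div]
  ring

lemma gauss_moment (n : ℕ) : ∫ x, x ^ n ∂(gaussianReal 0 1) = gm n := by
  rw [gaussian_pdf_repr, integral_withDensity_eq_integral_smul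
    ((measurable_gaussianPDFReal 0 1).real_toNNReal) (fun x => x ^ n)]
  have h2 : ∀ x : ℝ, (Real.toNNReal (gaussianPDFReal 0 1 x)) • x ^ n
      = (√(2*π))⁻¹ * (x ^ n * rexp (-(x ^ 2 / 2))) := by
    intro x; rw [NNReal.smul_def]; exact pdf_pointwise n x
  simp_rw [h2]
  rw [integral_const_mul, gauss_R]
  have hne : √(2*π) ≠ 0 := by positivity
  field_simp
  skip

lemma integrable_pow_gauss (n : ℕ) :
    Integrable (fun x : ℝ => x ^ n) (gaussianReal 0 1) := by
  rw [gaussian_pdf_repr, integrable_withDensity_iff_integrable_smul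
    ((measurable_gaussianPDFReal 0 1).real_toNNReal)]
  apply (((integrable_poly_gauss n).const_mul ((√(2*π))⁻¹)).congr)
  filter_upwards with x
  rw [NNReal.smul_def, pdf_pointwise n x]

lemma two_moment (a b : ℕ) : ∫ z : ℝ × ℝ, z.1 ^ a * z.2 ^ b
    ∂((gaussianReal 0 1).prod (gaussianReal 0 1)) = gm a * gm b := by
  rw [integral_prod_mul (f := fun x => x ^ a) (g := fun y => y ^ b), gauss_moment, gauss_moment]

lemma two_int (a b : ℕ) : Integrable (fun z : ℝ × ℝ => z.1 ^ a * z.2 ^ b)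
    ((gaussianReal 0 1).prod (gaussianReal 0 1)) :=
  (integrable_pow_gauss a).mul_prod (integrable_pow_gauss b)


set_option maxHeartbeats 1000000 in
theorem stmt_9
    {Ω : Type*} [MeasurableSpace Ω] (μ : Measure Ω) [IsProbabilityMeasure μ]
    (U W : Ω → ℝ) (hUm : Measurable U) (hWm : Measurable W)
    (hUW : IndepFun U W μ)
    (hU : Measure.map U μ = gaussianReal 0 1)
    (hW : Measure.map W μ = gaussianReal 0 1)
    (ρ : ℝ) (hρ : ρ ∈ Set.Icc (-1 : ℝ) 1)
    (V : Ω → ℝ) (hV : ∀ ω, V ω = ρ * U ω + Real.sqrt (1 - ρ ^ 2) * W ω)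
    (hρval : ρ = (3 / 10 : ℝ) * (((Real.sqrt 5 - 1) / 2) ^ ((1 : ℝ) / 3) - 1 - (2 / (Real.sqrt 5 - 1)) ^ ((1 : ℝ) / 3)))
    (X : Ω → ℝ) (hX : ∀ ω, X ω = 10 * U ω + (V ω) ^ 3 - 3 * V ω) :
    (∫ ω, (X ω) ^ 4 ∂μ = 3 * (∫ ω, (X ω) ^ 2 ∂μ) ^ 2) ∧
    (∫ ω, (X ω) ^ 6 ∂μ ≠ 15 * (∫ ω, (X ω) ^ 2 ∂μ) ^ 3) ∧
    (∀ (m : ℝ) (v : NNReal), Measure.map X μ ≠ gaussianReal m v) := by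
  have hs2 : Real.sqrt (1 - ρ ^ 2) ^ 2 = 1 - ρ ^ 2 :=
    Real.sq_sqrt (by nlinarith [hρ.1, hρ.2])
  set s : ℝ := Real.sqrt (1 - ρ ^ 2) with hsdef
  -- the cubic equation satisfied by ρ
  have h5 : (1:ℝ) < Real.sqrt 5 := by
    rw [show (1:ℝ) = Real.sqrt 1 from (Real.sqrt_one).symm]
    exact Real.sqrt_lt_sqrt (by norm_num) (by norm_num)
  have h5sq : Real.sqrt 5 ^ 2 = 5 := Real.sq_sqrt (by norm_num)
  set a : ℝ := ((Real.sqrt 5 - 1)/2) ^ ((1:ℝ)/3) with hadef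
  set b : ℝ := (2/(Real.sqrt 5 - 1)) ^ ((1:ℝ)/3) with hbdef
  have hbase1 : (0:ℝ) < (Real.sqrt 5 - 1)/2 := by linarith
  have hbase2 : (0:ℝ) < 2/(Real.sqrt 5 - 1) := by
    apply div_pos <;> linarith
  have ha3 : a ^ (3:ℕ) = (Real.sqrt 5 - 1)/2 := by
    rw [hadef, ← Real.rpow_natCast (((Real.sqrt 5 - 1)/2) ^ ((1:ℝ)/3)) 3,
      ← Real.rpow_mul hbase1.le]
    norm_num
  have hb3 : b ^ (3:ℕ) = 2/(Real.sqrt 5 - 1) := by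
    rw [hbdef, ← Real.rpow_natCast ((2/(Real.sqrt 5 - 1)) ^ ((1:ℝ)/3)) 3,
      ← Real.rpow_mul hbase2.le]
    norm_num
  have hb3' : b ^ (3:ℕ) = (Real.sqrt 5 + 1)/2 := by
    rw [hb3, div_eq_div_iff (by linarith) (by norm_num)]
    nlinarith [h5sq]
  have hab : a * b = 1 := by
    have hab3 : (a*b)^3 = 1 := by
      rw [mul_pow, ha3, hb3']
      nlinarith [h5sq]
    have hapos : 0 < a := Real.rpow_pos_of_pos hbase1 _
    have hbpos : 0 < b := Real.rpow_pos_of_pos hbase2 _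
    nlinarith [sq_nonneg (a*b - 1), sq_nonneg (a*b + 1), mul_pos hapos hbpos]
  have hcubic : 1000*ρ^3 + 900*ρ^2 + 540*ρ + 135 = 0 := by
    rw [hρval]
    linear_combination (27:ℝ)*ha3 - 27*hb3' - 81*(a-b)*hab
  -- transfer to the product Gaussian measure
  have hmap : Measure.map (fun ω => (U ω, W ω)) μ
      = (gaussianReal 0 1).prod (gaussianReal 0 1) := by
    rw [(indepFun_iff_map_prod_eq_prod_map_map hUm.aemeasurable hWm.aemeasurable).mp hUW, hU, hW]
  have hcont : ∀ c d : ℕ, Continuous (fun z : ℝ × ℝ => z.1 ^ c * z.2 ^ d) :=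
    fun c d => (continuous_fst.pow c).mul (continuous_snd.pow d)
  have hIntUW : ∀ c d : ℕ, Integrable (fun ω => U ω ^ c * W ω ^ d) μ := by
    intro c d
    have h2 : Integrable (fun z : ℝ × ℝ => z.1 ^ c * z.2 ^ d)
        (Measure.map (fun ω => (U ω, W ω)) μ) := by rw [hmap]; exact two_int c d
    exact (integrable_map_measure (hcont c d).aestronglyMeasurable
      (hUm.prodMk hWm).aemeasurable).mp h2
  have hEUW : ∀ c d : ℕ, ∫ ω, U ω ^ c * W ω ^ d ∂μ = gm c * gm d := by
    intro c d
    rw [← two_moment c d, ← hmap,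
      integral_map (hUm.prodMk hWm).aemeasurable (hcont c d).aestronglyMeasurable]
  -- expansion of U^j * V^p
  have hexpUV : ∀ (j p : ℕ), (fun ω => U ω ^ j * V ω ^ p)
      = fun ω => ∑ q ∈ Finset.range (p+1),
        ((p.choose q : ℝ) * ρ^q * s^(p-q)) * (U ω ^ (j+q) * W ω ^ (p-q)) := by
    intro j p; funext ω
    rw [hV ω, add_pow, Finset.mul_sum]
    refine Finset.sum_congr rfl fun q hq => ?_
    rw [pow_add]
    ring
  have hIntUV : ∀ j p, Integrable (fun ω => U ω ^ j * V ω ^ p) μ := by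
    intro j p; rw [hexpUV j p]
    exact integrable_finset_sum _ fun q hq => (hIntUW _ _).const_mul _
  have hEUV : ∀ j p, ∫ ω, U ω ^ j * V ω ^ p ∂μ
      = ∑ q ∈ Finset.range (p+1),
        (p.choose q : ℝ) * ρ^q * s^(p-q) * (gm (j+q) * gm (p-q)) := by
    intro j p
    rw [hexpUV j p, integral_finset_sum _ fun q hq => (hIntUW _ _).const_mul _]
    refine Finset.sum_congr rfl fun q hq => ?_
    rw [integral_const_mul, hEUW]
  -- expansion of U^j * (V^3 - 3V)^m
  have hexpUB : ∀ (j m : ℕ), (fun ω => U ω ^ j * (V ω ^ 3 - 3 * V ω) ^ m)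
      = fun ω => ∑ i ∈ Finset.range (m+1),
        ((m.choose i : ℝ) * (-3)^(m-i)) * (U ω ^ j * V ω ^ (m + 2*i)) := by
    intro j m; funext ω
    rw [show V ω ^ 3 - 3 * V ω = V ω ^ 3 + (-3) * V ω from by ring, add_pow, Finset.mul_sum]
    refine Finset.sum_congr rfl fun i hi => ?_
    have hi' : i ≤ m := Nat.lt_succ_iff.mp (Finset.mem_range.mp hi)
    rw [show m + 2*i = 3*i + (m - i) from by omega, pow_add, pow_mul]
    ring
  have hIntUB : ∀ j m, Integrable (fun ω => U ω ^ j * (V ω ^ 3 - 3 * V ω) ^ m) μ := by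
    intro j m; rw [hexpUB j m]
    exact integrable_finset_sum _ fun i hi => (hIntUV _ _).const_mul _
  have hEUB : ∀ j m, ∫ ω, U ω ^ j * (V ω ^ 3 - 3 * V ω) ^ m ∂μ
      = ∑ i ∈ Finset.range (m+1), (m.choose i : ℝ) * (-3)^(m-i) *
          (∑ q ∈ Finset.range (m+2*i+1),
            ((m+2*i).choose q : ℝ) * ρ^q * s^((m+2*i)-q) * (gm (j+q) * gm ((m+2*i)-q))) := by
    intro j m
    rw [hexpUB j m, integral_finset_sum _ fun i hi => (hIntUV _ _).const_mul _]
    refine Finset.sum_congr rfl fun i hi => ?_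
    rw [integral_const_mul, hEUV]
  -- expansion of X^k
  have hexpX : ∀ (k : ℕ), (fun ω => X ω ^ k)
      = fun ω => ∑ j ∈ Finset.range (k+1),
        ((k.choose j : ℝ) * 10^j) * (U ω ^ j * (V ω ^ 3 - 3 * V ω) ^ (k - j)) := by
    intro k; funext ω
    rw [hX ω, show 10 * U ω + V ω ^ 3 - 3 * V ω
      = 10 * U ω + (V ω ^ 3 - 3 * V ω) from by ring, add_pow]
    refine Finset.sum_congr rfl fun j hj => ?_
    ring
  have hEX : ∀ k, ∫ ω, X ω ^ k ∂μ = ∑ j ∈ Finset.range (k+1),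
      (k.choose j : ℝ) * 10^j * ∫ ω, U ω ^ j * (V ω ^ 3 - 3 * V ω) ^ (k - j) ∂μ := by
    intro k
    rw [hexpX k, integral_finset_sum _ fun j hj => (hIntUB _ _).const_mul _]
    refine Finset.sum_congr rfl fun j hj => ?_
    rw [integral_const_mul]
  have hXmeas : Measurable X := by
    have : X = fun ω => 10 * U ω + (ρ * U ω + s * W ω) ^ 3 - 3 * (ρ * U ω + s * W ω) := by
      funext ω; rw [hX ω, hV ω]
    rw [this]; fun_prop
  -- the moment values
  have E1 : ∫ ω, X ω ^ 1 ∂μ = 0 := by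
    rw [hEX 1]
    simp only [hEUB]
    simp only [Finset.sum_range_succ, Finset.sum_range_zero]
    norm_num [gm, Nat.choose]
  have E2 : ∫ ω, X ω ^ 2 ∂μ = 106 := by
    rw [hEX 2]
    simp only [hEUB]
    simp only [Finset.sum_range_succ, Finset.sum_range_zero]
    norm_num [gm, Nat.choose]
    linear_combination ((6) + (-3)*s^2 + (15)*s^4 + (60)*ρ + (-3)*ρ^2 + (30)*ρ^2*s^2 + (15)*ρ^4 : ℝ) * hs2
  have E4 : ∫ ω, X ω ^ 4 ∂μ = 36948 + 12960*ρ + 21600*ρ^2 + 24000*ρ^3 := by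
    rw [hEX 4]
    simp only [hEUB]
    simp only [Finset.sum_range_succ, Finset.sum_range_zero]
    norm_num [gm, Nat.choose]
    linear_combination ((6948) + (1548)*s^2 + (12105)*s^4 + (4725)*s^6 + (-945)*s^8 + (10395)*s^10 + (48960)*ρ + (16200)*ρ*s^2 + (37800)*ρ*s^6 + (12348)*ρ^2 + (78210)*ρ^2*s^2 + (14175)*ρ^2*s^4 + (-3780)*ρ^2*s^6 + (51975)*ρ^2*s^8 + (16200)*ρ^3 + (113400)*ρ^3*s^4 + (66105)*ρ^4 + (14175)*ρ^4*s^2 + (-5670)*ρ^4*s^4 + (103950)*ρ^4*s^6 + (113400)*ρ^5*s^2 + (4725)*ρ^6 + (-3780)*ρ^6*s^2 + (103950)*ρ^6*s^4 + (37800)*ρ^7 + (-945)*ρ^8 + (51975)*ρ^8*s^2 + (10395)*ρ^10 : ℝ) * hs2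
  have E6 : ∫ ω, X ω ^ 6 ∂μ
      = 34330920 + 62596800*ρ + 104328000*ρ^2 + 102960000*ρ^3 + 32400000*ρ^4 := by
    rw [hEX 6]
    simp only [hEUB]
    simp only [Finset.sum_range_succ, Finset.sum_range_zero]
    norm_num [gm, Nat.choose]
    linear_combination ((19330920) + (15280920)*s^2 + (23016420)*s^4 + (18685485)*s^6 + (10333575)*s^8 + (26195400)*s^10 + (16216200)*s^12 + (-2027025)*s^14 + (34459425)*s^16 + (89596800)*ρ + (67456800)*ρ*s^2 + (43375500)*ρ*s^4 + (97524000)*ρ*s^6 + (56133000)*ρ*s^8 + (121621500)*ρ*s^12 + (103408920)*ρ^2 + (197502840)*ρ^2*s^2 + (141106455)*ρ^2*s^4 + (58344300)*ρ^2*s^6 + (318087000)*ρ^2*s^8 + (97297200)*ρ^2*s^10 + (-14189175)*ρ^2*s^12 + (275675400)*ρ^2*s^14 + (137656800)*ρ^3 + (124551000)*ρ^3*s^2 + (443772000)*ρ^3*s^4 + (224532000)*ρ^3*s^6 + (729729000)*ρ^3*s^10 + (228486420)*ρ^4 + (226156455)*ρ^4*s^2 + (113031450)*ρ^4*s^4 +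 (1010394000)*ρ^4*s^6 + (243243000)*ρ^4*s^8 + (-42567525)*ρ^4*s^10 + (964863900)*ρ^4*s^12 + (81175500)*ρ^5 + (594972000)*ρ^5*s^2 + (336798000)*ρ^5*s^4 + (1824322500)*ρ^5*s^8 + (103735485)*ρ^6 + (92364300)*ρ^6*s^2 + (1384614000)*ρ^6*s^4 + (324324000)*ρ^6*s^6 + (-70945875)*ρ^6*s^8 + (1929727800)*ρ^6*s^10 + (248724000)*ρ^7 + (224532000)*ρ^7*s^2 + (2432430000)*ρ^7*s^6 + (27343575)*ρ^8 + (879417000)*ρ^8*s^2 + (243243000)*ρ^8*s^4 + (-70945875)*ρ^8*s^6 + (2412159750)*ρ^8*s^8 + (56133000)*ρ^9 + (1824322500)*ρ^9*s^4 + (213305400)*ρ^10 + (97297200)*ρ^10*s^2 + (-42567525)*ρ^10*s^4 + (1929727800)*ρ^10*s^6 + (729729000)*ρ^11*s^2 + (16216200)*ρ^12 + (-14189175)*ρ^12*s^2 + (964863900)*ρ^12*s^4 + (121621500)*ρ^13 + (-2027025)*ρ^14 + (275675400)*ρ^14*s^2 + (34459425)*ρ^16 : ℝ) * hs2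
  -- conclusions
  have hD : (34330920 + 62596800*ρ + 104328000*ρ^2 + 102960000*ρ^3 + 32400000*ρ^4 : ℝ)
      - 15 * 106^3 = 20412000*(ρ + 9/20)^2 + 2369250 := by
    linear_combination (32400*ρ + 73800) * hcubic
  have part1 : ∫ ω, (X ω) ^ 4 ∂μ = 3 * (∫ ω, (X ω) ^ 2 ∂μ) ^ 2 := by
    rw [E4, E2]
    linear_combination (24:ℝ) * hcubic
  have part2 : ∫ ω, (X ω) ^ 6 ∂μ ≠ 15 * (∫ ω, (X ω) ^ 2 ∂μ) ^ 3 := by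
    rw [E6, E2]
    intro h
    nlinarith [sq_nonneg (ρ + 9/20), hD]
  refine ⟨part1, part2, ?_⟩
  intro m v hmapX
  -- moments of a general Gaussian
  have hvnn : (0:ℝ) ≤ (v:ℝ) := v.2
  have hrepr : gaussianReal m v
      = Measure.map (fun x => Real.sqrt v * x + m) (gaussianReal 0 1) := by
    have h1 : Measure.map (fun x : ℝ => Real.sqrt v * x) (gaussianReal 0 1)
        = gaussianReal 0 v := by
      rw [show (fun x : ℝ => Real.sqrt v * x) = (fun x : ℝ => Real.sqrt v * x) from rfl,
        gaussianReal_map_const_mul (Real.sqrt v)]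
      congr 1
      · ring
      · ext
        simp [Real.sq_sqrt hvnn]
    have h2 : (fun x : ℝ => Real.sqrt v * x + m)
        = (fun x => x + m) ∘ (fun x : ℝ => Real.sqrt v * x) := rfl
    rw [h2, ← Measure.map_map (measurable_add_const m) (measurable_const_mul _), h1,
      gaussianReal_map_add_const m, zero_add]
  have hmom : ∀ k : ℕ, ∫ ω, X ω ^ k ∂μ = ∫ x, (Real.sqrt v * x + m) ^ k ∂(gaussianReal 0 1) := by
    intro k
    have h1 : ∫ ω, X ω ^ k ∂μ = ∫ x, x ^ k ∂(gaussianReal m v) := by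
      rw [← hmapX, integral_map hXmeas.aemeasurable (continuous_pow k).aestronglyMeasurable]
    rw [h1, hrepr, integral_map (by fun_prop)
      ((continuous_pow k).aestronglyMeasurable)]
  have hgint : ∀ k : ℕ, ∫ x, (Real.sqrt v * x + m) ^ k ∂(gaussianReal 0 1)
      = ∑ j ∈ Finset.range (k+1), (k.choose j : ℝ) * (Real.sqrt v)^j * m^(k-j) * gm j := by
    intro k
    have hexp : (fun x : ℝ => (Real.sqrt v * x + m) ^ k)
        = fun x => ∑ j ∈ Finset.range (k+1),
          ((k.choose j : ℝ) * (Real.sqrt v)^j * m^(k-j)) * x ^ j := by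
      funext x
      rw [add_pow]
      refine Finset.sum_congr rfl fun j hj => ?_
      ring
    rw [hexp, integral_finset_sum _ fun j hj => (integrable_pow_gauss j).const_mul _]
    refine Finset.sum_congr rfl fun j hj => ?_
    rw [integral_const_mul, gauss_moment]
  have hm0 : m = 0 := by
    have h := hmom 1
    rw [E1, hgint 1] at h
    simp only [Finset.sum_range_succ, Finset.sum_range_zero] at h
    norm_num [gm, Nat.choose] at h
    linarith
  have hv106 : (v:ℝ) = 106 := by
    have h := hmom 2
    rw [E2, hgint 2] at h
    simp only [Finset.sum_range_succ, Finset.sum_range_zero] at h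
    norm_num [gm, Nat.choose, hm0, Real.sq_sqrt hvnn] at h
    linarith
  have h6 := hmom 6
  rw [E6, hgint 6] at h6
  simp only [Finset.sum_range_succ, Finset.sum_range_zero] at h6
  norm_num [gm, Nat.choose, hm0] at h6
  rw [show ((Real.sqrt v)^6 : ℝ) = ((Real.sqrt v)^2)^3 from by ring, Real.sq_sqrt hvnn, hv106] at h6
  nlinarith [hD, sq_nonneg (ρ + 9/20), h6]
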